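/- arXiv:2409.08085 — 2 statements merged into one kernel-verified Lean document; each statement's English description precedes it below -/
import Mathlib

section
/- For all integers n ≥ 2, the polynomial h_n(x;t) satisfies the differential recurrence (n-1)(x-1)·h_{n+1}(x;t) = -n(2tx+x+1)·h_n(x;t) + x(x²+4tx+2x+1)·h_n'(x;t), where h_n' denotes the derivative with respect to x. -/
open Polynomial Finset

/-- Speyer's g-polynomial of the uniform matroid `U_{n,d}`, evaluated at `t`. -/
noncomputable def speyerG (n d : ℕ) (t : ℝ) : ℝ :=
  ∑ i ∈ Finset.Icc 1 d,
    ((n - i - 1).choose (d - i) : ℝ) * ((n - d - 1).choose (i - 1) : ℝ) * t ^ i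

/-- The generating polynomial `h_n(x;t) = ∑_{d=1}^{n-1} g_{n,d}(t) x^d` (in `x`). -/
noncomputable def hPoly (n : ℕ) (t : ℝ) : Polynomial ℝ :=
  ∑ d ∈ Finset.Icc 1 (n - 1), Polynomial.C (speyerG n d t) * Polynomial.X ^ d

def chA (m e j : ℕ) : ℕ := (m - j - 1).choose (e - j) * (m - e - 1).choose (j - 1)

lemma chA_zero (m e j : ℕ) (hj : 1 ≤ j) (h2 : 2 ≤ m) (hme : m ≤ e) : chA m e j = 0 := by
  unfold chA
  rcases eq_or_lt_of_le hj with h | h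
  · rw [← h, Nat.choose_eq_zero_of_lt (by omega : m - 1 - 1 < e - 1)]
    simp
  · rw [show m - e - 1 = 0 by omega, Nat.choose_eq_zero_of_lt (by omega : 0 < j - 1), mul_zero]

lemma nat_key (n d i : ℕ) (hi : 1 ≤ i) (hid : i ≤ d + 1) :
    chA (n+4) (d+1) i = chA (n+3) (d+1) i + (if i ≤ d then chA (n+3) d i else 0)
      + (if 2 ≤ i then chA (n+2) d (i-1) else 0) := by
  rcases le_or_gt d (n+1) with hd | hd
  · -- main case
    obtain ⟨j, rfl⟩ : ∃ j, i = j + 1 := ⟨i - 1, by omega⟩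
    obtain ⟨b, hb⟩ : ∃ b, d = j + b := ⟨d - j, by omega⟩
    obtain ⟨s, hs⟩ : ∃ s, n + 1 = d + s := ⟨n + 1 - d, by omega⟩
    subst hb
    unfold chA
    rw [show n+4-(j+1)-1 = b+s+1 by omega, show (j+b+1) - (j+1) = b by omega,
        show n+4-(j+b+1)-1 = s+1 by omega, show (j+1)-1 = j by omega,
        show n+3-(j+1)-1 = b+s by omega, show n+3-(j+b+1)-1 = s by omega,
        show (j+b)-(j+1) = b-1 by omega,
        show n+3-(j+b)-1 = s+1 by omega, show n+2-j-1 = b+s by omega,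
        show (j+b)-j = b by omega,
        show n+2-(j+b)-1 = s by omega]
    rcases b with _ | b <;> rcases j with _ | j <;>
      simp [Nat.choose_succ_succ, Nat.add_le_add_iff_left] <;> ring
  · rcases eq_or_lt_of_le (show n+2 ≤ d by omega) with hd2 | hd3
    · -- d = n + 2
      subst hd2
      rcases i with _ | _ | i
      · omega
      · -- i = 1
        rw [if_pos (by omega : (0:ℕ)+1 ≤ n+2), if_neg (by omega : ¬ (2:ℕ) ≤ 0+1)]
        unfold chA
        rw [show n+4-(0+1)-1 = n+2 by omega, show n+2+1-(0+1) = n+2 by omega]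
        simp [Nat.choose_self, show n+2-1 = n+1 by omega,
          show n+4-(n+2+1)-1 = 0 by omega,
          show n+3-(n+2+1)-1 = 0 by omega, show n+3-(n+2)-1 = 0 by omega,
          show n+2-(0+1) = n+1 by omega,
          Nat.choose_eq_zero_of_lt (by omega : n+1 < n+2)]
      · -- i ≥ 2
        unfold chA
        rw [show n+4-(n+2+1)-1 = 0 by omega, show n+3-(n+2+1)-1 = 0 by omega,
            show n+3-(n+2)-1 = 0 by omega, show n+2-(n+2)-1 = 0 by omega,
            show (i+1+1)-1 = i+1 by omega,
            Nat.choose_eq_zero_of_lt (by omega : 0 < i+1)]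
        simp only [mul_zero, ite_self, zero_add, add_zero]
        rw [if_pos (by omega : 2 ≤ i+1+1), show (i+1)-1 = i by omega]
        rcases i with _ | i
        · rw [show n+2-(0+1)-1 = n by omega, show n+2-(0+1) = n+1 by omega,
              Nat.choose_eq_zero_of_lt (by omega : n < n+1)]
          simp
        · rw [Nat.choose_eq_zero_of_lt (by omega : 0 < i+1), mul_zero]
    · -- n + 3 ≤ d
      rw [chA_zero (n+4) (d+1) i hi (by omega) (by omega),
          chA_zero (n+3) (d+1) i hi (by omega) (by omega)]
      simp only [chA_zero (n+3) d i hi (by omega) (by omega), ite_self]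
      by_cases h2 : 2 ≤ i
      · rw [if_pos h2, chA_zero (n+2) d (i-1) (by omega) (by omega) (by omega)]
      · rw [if_neg h2]

lemma speyerG_eq_sum (n d : ℕ) (t : ℝ) :
    speyerG n d t = ∑ i ∈ Finset.Icc 1 d, (chA n d i : ℝ) * t ^ i := by
  unfold speyerG chA
  refine Finset.sum_congr rfl fun i _ => ?_
  push_cast
  ring

lemma speyerG_zero (n : ℕ) (t : ℝ) : speyerG n 0 t = 0 := by simp [speyerG]

lemma speyerG_eq_zero (n d : ℕ) (h2 : 2 ≤ n) (hnd : n ≤ d) (t : ℝ) : speyerG n d t = 0 := by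
  rw [speyerG_eq_sum]
  refine Finset.sum_eq_zero fun i hi => ?_
  rw [Finset.mem_Icc] at hi
  rw [chA_zero n d i hi.1 h2 hnd]
  simp

lemma speyerG_rec (n d : ℕ) (t : ℝ) :
    speyerG (n+4) (d+1) t
      = speyerG (n+3) (d+1) t + speyerG (n+3) d t + t * speyerG (n+2) d t := by
  rw [speyerG_eq_sum, speyerG_eq_sum, speyerG_eq_sum, speyerG_eq_sum]
  have h3 : ∑ i ∈ Finset.Icc 1 d, (chA (n+3) d i : ℝ) * t ^ i
      = ∑ i ∈ Finset.Icc 1 (d+1), (if i ≤ d then (chA (n+3) d i : ℝ) * t ^ i else 0) := by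
    rw [Finset.sum_congr rfl (fun i hi => (if_pos (Finset.mem_Icc.mp hi).2).symm)]
    exact Finset.sum_subset (Finset.Icc_subset_Icc_right (by omega))
      (fun x hx hnx => if_neg (by simp only [Finset.mem_Icc] at hx hnx; omega))
  have h4 : t * ∑ i ∈ Finset.Icc 1 d, (chA (n+2) d i : ℝ) * t ^ i
      = ∑ i ∈ Finset.Icc 1 (d+1), (if 2 ≤ i then (chA (n+2) d (i-1) : ℝ) * t ^ i else 0) := by
    rw [Finset.mul_sum]
    have hmap : Finset.Icc 2 (d+1) = Finset.map (addRightEmbedding 1) (Finset.Icc 1 d) := by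
      rw [Finset.map_add_right_Icc]
    calc ∑ i ∈ Finset.Icc 1 d, t * ((chA (n+2) d i : ℝ) * t ^ i)
        = ∑ i ∈ Finset.Icc 2 (d+1), (chA (n+2) d (i-1) : ℝ) * t ^ i := by
          rw [hmap, Finset.sum_map]
          refine Finset.sum_congr rfl fun i _ => ?_
          simp only [addRightEmbedding_apply, Nat.add_sub_cancel]
          ring
      _ = ∑ i ∈ Finset.Icc 1 (d+1), (if 2 ≤ i then (chA (n+2) d (i-1) : ℝ) * t ^ i else 0) := by
          rw [Finset.sum_congr rfl (fun i hi => (if_pos (Finset.mem_Icc.mp hi).1).symm)]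
          exact Finset.sum_subset (Finset.Icc_subset_Icc_left (by omega))
            (fun x hx hnx => if_neg (by simp only [Finset.mem_Icc] at hx hnx; omega))
  rw [h3, h4, ← Finset.sum_add_distrib, ← Finset.sum_add_distrib]
  refine Finset.sum_congr rfl fun i hi => ?_
  rw [Finset.mem_Icc] at hi
  have hk := nat_key n d i hi.1 hi.2
  by_cases h1 : i ≤ d <;> by_cases h2 : 2 ≤ i <;>
    simp only [h1, h2, if_true, if_false] at hk ⊢ <;>
    · have hcast := congrArg (fun m : ℕ => (m : ℝ) * t ^ i) hk
      push_cast at hcast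
      linear_combination hcast

lemma coeff_hPoly (n : ℕ) (hn : 2 ≤ n) (t : ℝ) (k : ℕ) :
    (hPoly n t).coeff k = speyerG n k t := by
  rw [hPoly, Polynomial.finset_sum_coeff]
  simp only [Polynomial.coeff_C_mul, Polynomial.coeff_X_pow, mul_ite, mul_one, mul_zero]
  rw [Finset.sum_ite_eq (Finset.Icc 1 (n-1)) k (fun d => speyerG n d t)]
  split_ifs with h
  · rfl
  · rw [Finset.mem_Icc] at h
    rcases Nat.eq_zero_or_pos k with rfl | hk
    · exact (speyerG_zero n t).symm
    · exact (speyerG_eq_zero n k hn (by omega) t).symm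

lemma hPoly_rec (n : ℕ) (t : ℝ) :
    hPoly (n+4) t = (1 + X) * hPoly (n+3) t + Polynomial.C t * X * hPoly (n+2) t := by
  ext k
  rw [Polynomial.coeff_add, add_mul, one_mul, Polynomial.coeff_add, mul_assoc,
      Polynomial.coeff_C_mul]
  rcases k with _ | k
  · simp [Polynomial.mul_coeff_zero, coeff_hPoly (n+4) (by omega) t,
      coeff_hPoly (n+3) (by omega) t, coeff_hPoly (n+2) (by omega) t, speyerG_zero]
  · rw [Polynomial.coeff_X_mul, Polynomial.coeff_X_mul, coeff_hPoly (n+4) (by omega) t,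
        coeff_hPoly (n+3) (by omega) t, coeff_hPoly (n+3) (by omega) t,
        coeff_hPoly (n+2) (by omega) t, speyerG_rec]

lemma hPoly_two (t : ℝ) : hPoly 2 t = Polynomial.C t * X := by
  norm_num [hPoly, speyerG]

lemma hPoly_three (t : ℝ) : hPoly 3 t = Polynomial.C t * X + Polynomial.C t * X ^ 2 := by
  norm_num [hPoly, speyerG, Finset.sum_Icc_succ_top]

lemma hPoly_four (t : ℝ) :
    hPoly 4 t = Polynomial.C t * X + Polynomial.C (2*t + t^2) * X ^ 2 + Polynomial.C t * X ^ 3 := by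
  have g1 : speyerG 4 1 t = t := by norm_num [speyerG]
  have g2 : speyerG 4 2 t = 2*t + t^2 := by
    rw [speyerG, show Finset.Icc 1 2 = ({1, 2} : Finset ℕ) from rfl]
    norm_num
  have g3 : speyerG 4 3 t = t := by
    rw [speyerG, show Finset.Icc 1 3 = ({1, 2, 3} : Finset ℕ) from rfl]
    norm_num
  rw [hPoly, show (4:ℕ)-1 = 3 from rfl, show Finset.Icc 1 3 = ({1, 2, 3} : Finset ℕ) from rfl]
  rw [Finset.sum_insert (by decide), Finset.sum_insert (by decide), Finset.sum_singleton,
      g1, g2, g3]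
  ring

def Rn (n : ℕ) (t : ℝ) : Prop :=
  Polynomial.C ((n : ℝ) - 1) * (Polynomial.X - 1) * hPoly (n + 1) t
    = - Polynomial.C (n : ℝ) * (Polynomial.C (2 * t) * Polynomial.X + Polynomial.X + 1) * hPoly n t
      + Polynomial.X * (Polynomial.X ^ 2 + Polynomial.C (4 * t) * Polynomial.X + 2 * Polynomial.X + 1)
        * Polynomial.derivative (hPoly n t)

lemma Rn_two (t : ℝ) : Rn 2 t := by
  unfold Rn
  rw [show (2:ℕ)+1 = 3 from rfl, hPoly_three, hPoly_two]
  simp only [derivative_mul, derivative_C, derivative_X, zero_mul, mul_one, zero_add]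
  push_cast
  simp only [map_sub, map_add, map_mul, map_ofNat, map_one]
  ring

lemma Rn_three (t : ℝ) : Rn 3 t := by
  unfold Rn
  rw [show (3:ℕ)+1 = 4 from rfl, hPoly_four, hPoly_three]
  simp only [derivative_mul, derivative_C, derivative_X, derivative_add, derivative_X_pow,
    zero_mul, mul_one, zero_add]
  push_cast
  simp only [map_sub, map_add, map_mul, map_ofNat, map_one, map_pow]
  ring

lemma Rn_step (k : ℕ) (t : ℝ) (h1 : Rn (k+2) t) (h2 : Rn (k+3) t) : Rn (k+4) t := by
  unfold Rn at h1 h2 ⊢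
  have r2 : hPoly (k+4) t = (1 + X) * hPoly (k+3) t + Polynomial.C t * X * hPoly (k+2) t :=
    hPoly_rec k t
  have r1 : hPoly (k+5) t = (1 + X) * hPoly (k+4) t + Polynomial.C t * X * hPoly (k+3) t := by
    have := hPoly_rec (k+1) t
    norm_num at this
    convert this using 3 <;> omega
  rw [show k+5 = k+4+1 from rfl] at r1
  rw [show k+3+1 = k+4 from rfl] at h2
  rw [r2] at h2 r1
  rw [r1, r2]
  simp only [derivative_add, derivative_mul, derivative_one, derivative_X, derivative_C,
    zero_mul, zero_add, mul_one, one_mul] at h1 h2 ⊢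
  push_cast at h1 h2 ⊢
  simp only [map_sub, map_add, map_mul, map_ofNat, map_one] at h1 h2 ⊢
  linear_combination (1 + X) * h2 + Polynomial.C t * X * h1

lemma Rn_all (n : ℕ) (hn : 2 ≤ n) (t : ℝ) : Rn n t := by
  have key : ∀ k, Rn (k+2) t ∧ Rn (k+3) t := by
    intro k
    induction k with
    | zero => exact ⟨Rn_two t, Rn_three t⟩
    | succ k ih => exact ⟨ih.2, Rn_step k t ih.1 ih.2⟩
  obtain ⟨k, rfl⟩ : ∃ k, n = k + 2 := ⟨n - 2, by omega⟩
  exact (key k).1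


theorem hPoly_diff_rec (n : ℕ) (hn : 2 ≤ n) (t : ℝ) :
    Polynomial.C ((n : ℝ) - 1) * (Polynomial.X - 1) * hPoly (n + 1) t
      = - Polynomial.C (n : ℝ) * (Polynomial.C (2 * t) * Polynomial.X + Polynomial.X + 1) * hPoly n t
        + Polynomial.X * (Polynomial.X ^ 2 + Polynomial.C (4 * t) * Polynomial.X + 2 * Polynomial.X + 1)
          * Polynomial.derivative (hPoly n t) := Rn_all n hn t
end

section
/- For t > 0 and n ≥ 2, the mean of the coefficient distribution of h_n(x;t) equals n/2; that is, h_n'(1;t)/h_n(1;t) = n/2, where the derivative is with respect to x. -/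
open Polynomial Finset

lemma key_abc (a b c : ℕ) :
    (a+b+c).choose b * (a+c).choose a = (a+b+c).choose c * (a+b).choose a := by
  have h1 := Nat.choose_mul (n := a+b+c) (show a ≤ a+c by omega)
  have h2 := Nat.choose_mul (n := a+b+c) (show a ≤ a+b by omega)
  have e1 : a+b+c-a = b+c := by omega
  have e2 : a+c-a = c := by omega
  have e3 : a+b-a = b := by omega
  rw [e1, e2] at h1
  rw [e1, e3] at h2
  have s1 : (a+b+c).choose b = (a+b+c).choose (a+c) :=
    Nat.choose_symm_of_eq_add (by omega)
  have s2 : (a+b+c).choose c = (a+b+c).choose (a+b) :=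
    Nat.choose_symm_of_eq_add (by omega)
  have s3 : (b+c).choose c = (b+c).choose b := Nat.choose_symm_of_eq_add (by omega)
  rw [s1, s2, h1, h2, s3]

lemma term_eq (n d i : ℕ) (hi : 1 ≤ i) (hid : i ≤ d) (hdn : d + 1 ≤ n) (hind : i + d ≤ n) :
    (n - i - 1).choose (d - i) * (n - d - 1).choose (i - 1)
      = (n - i - 1).choose (n - d - i) * (d - 1).choose (i - 1) := by
  obtain ⟨a, rfl⟩ : ∃ a, i = a + 1 := ⟨i - 1, by omega⟩
  obtain ⟨b, rfl⟩ : ∃ b, d = a + 1 + b := ⟨d - (a+1), by omega⟩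
  obtain ⟨c, rfl⟩ : ∃ c, n = 2*a + b + c + 2 := ⟨n - (a+1+b) - (a+1), by omega⟩
  rw [show 2*a+b+c+2 - (a+1) - 1 = a+b+c by omega,
      show a+1+b - (a+1) = b by omega,
      show 2*a+b+c+2 - (a+1+b) - 1 = a+c by omega,
      show a+1-1 = a by omega,
      show 2*a+b+c+2 - (a+1+b) - (a+1) = c by omega,
      show a+1+b-1 = a+b by omega]
  exact key_abc a b c

lemma speyerG_symm (n d : ℕ) (hd1 : 1 ≤ d) (hdn : d ≤ n - 1) (hn : 2 ≤ n) (t : ℝ) :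
    speyerG n d t = speyerG n (n - d) t := by
  have hdn' : d + 1 ≤ n := by omega
  set m := min d (n - d) with hm
  have hA : speyerG n d t = ∑ i ∈ Finset.Icc 1 m,
      ((n - i - 1).choose (d - i) : ℝ) * ((n - d - 1).choose (i - 1) : ℝ) * t ^ i := by
    rw [speyerG]
    refine (Finset.sum_subset (Finset.Icc_subset_Icc_right (min_le_left _ _)) ?_).symm
    intro i hi hni
    simp only [Finset.mem_Icc] at hi hni
    have hind : n - d < i := by omega
    have : (n - d - 1).choose (i - 1) = 0 := Nat.choose_eq_zero_of_lt (by omega)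
    rw [this]; ring
  have hB : speyerG n (n - d) t = ∑ i ∈ Finset.Icc 1 m,
      ((n - i - 1).choose (n - d - i) : ℝ) * ((d - 1).choose (i - 1) : ℝ) * t ^ i := by
    rw [speyerG]
    have hnd : n - (n - d) - 1 = d - 1 := by omega
    rw [hnd]
    refine (Finset.sum_subset (Finset.Icc_subset_Icc_right (min_le_right _ _)) ?_).symm
    intro i hi hni
    simp only [Finset.mem_Icc] at hi hni
    have hind : d < i := by omega
    have : (d - 1).choose (i - 1) = 0 := Nat.choose_eq_zero_of_lt (by omega)
    rw [this]; ring
  rw [hA, hB]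
  refine Finset.sum_congr rfl fun i hi => ?_
  simp only [Finset.mem_Icc] at hi
  have := term_eq n d i hi.1 (by omega) hdn' (by omega)
  rw [← Nat.cast_mul, ← Nat.cast_mul, this]

lemma speyerG_pos (n d : ℕ) (hd1 : 1 ≤ d) (hdn : d ≤ n - 1) (hn : 2 ≤ n) {t : ℝ}
    (ht : 0 < t) : 0 < speyerG n d t := by
  rw [speyerG]
  refine Finset.sum_pos' (fun i _ => by positivity) ⟨1, Finset.mem_Icc.mpr ⟨le_refl 1, hd1⟩, ?_⟩
  have h1 : 0 < (n - 1 - 1).choose (d - 1) := Nat.choose_pos (by omega)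
  have h2 : (n - d - 1).choose (1 - 1) = 1 := by simp
  rw [h2]
  have h3 : (0:ℝ) < ((n - 1 - 1).choose (d - 1) : ℝ) := by exact_mod_cast h1
  positivity

theorem hPoly_mean (t : ℝ) (ht : 0 < t) (n : ℕ) (hn : 2 ≤ n) :
    (Polynomial.derivative (hPoly n t)).eval 1 / (hPoly n t).eval 1 = (n : ℝ) / 2 := by
  have hS : (hPoly n t).eval 1 = ∑ d ∈ Finset.Icc 1 (n-1), speyerG n d t := by
    simp [hPoly, Polynomial.eval_finset_sum]
  have hM : (Polynomial.derivative (hPoly n t)).eval 1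
      = ∑ d ∈ Finset.Icc 1 (n-1), (d : ℝ) * speyerG n d t := by
    simp [hPoly, Polynomial.derivative_sum, Polynomial.eval_finset_sum]
    exact Finset.sum_congr rfl fun d _ => by
      simp only [Polynomial.derivative_X_pow, Polynomial.eval_mul, Polynomial.eval_C,
        Polynomial.eval_pow, Polynomial.eval_X, one_pow, mul_one]
      ring
  have hSpos : 0 < ∑ d ∈ Finset.Icc 1 (n-1), speyerG n d t := by
    refine Finset.sum_pos (fun d hd => ?_) ⟨1, Finset.mem_Icc.mpr ⟨le_refl 1, by omega⟩⟩
    simp only [Finset.mem_Icc] at hd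
    exact speyerG_pos n d hd.1 hd.2 hn ht
  have hre : (∑ d ∈ Finset.Icc 1 (n-1), (d : ℝ) * speyerG n d t)
      = ∑ d ∈ Finset.Icc 1 (n-1), ((n - d : ℕ) : ℝ) * speyerG n d t := by
    refine Finset.sum_nbij' (i := fun d => n - d) (j := fun d => n - d) ?_ ?_ ?_ ?_ ?_
    · intro a ha; simp only [Finset.mem_Icc] at ha ⊢; omega
    · intro a ha; simp only [Finset.mem_Icc] at ha ⊢; omega
    · intro a ha; simp only [Finset.mem_Icc] at ha; omega
    · intro a ha; simp only [Finset.mem_Icc] at ha; omega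
    · intro a ha
      simp only [Finset.mem_Icc] at ha
      rw [show n - (n - a) = a by omega, ← speyerG_symm n a ha.1 ha.2 hn t]
  have hsum : (∑ d ∈ Finset.Icc 1 (n-1), (d : ℝ) * speyerG n d t)
      + (∑ d ∈ Finset.Icc 1 (n-1), ((n - d : ℕ) : ℝ) * speyerG n d t)
      = (n : ℝ) * ∑ d ∈ Finset.Icc 1 (n-1), speyerG n d t := by
    rw [← Finset.sum_add_distrib, Finset.mul_sum]
    refine Finset.sum_congr rfl fun d hd => ?_
    simp only [Finset.mem_Icc] at hd
    have : ((n - d : ℕ) : ℝ) = (n : ℝ) - (d : ℝ) := by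
      rw [Nat.cast_sub (by omega)]
    rw [this]; ring
  rw [hS, hM, div_eq_div_iff hSpos.ne' two_ne_zero]
  linarith [hre, hsum]
end
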